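/- Let (ξ_k, η_k) and (ξ, η) be random pairs on a probability space (Ω, F, P), where η_k, η are nonnegative with E[η_k] = E[η] = 1. Define probability measures P̃_k and P̃ by dP̃_k/dP = η_k and dP̃/dP = η. If (ξ_k, η_k) converges in distribution to (ξ, η), then the law of ξ_k under P̃_k converges weakly to the law of ξ under P̃. -/

import Mathlib

open MeasureTheory BoundedContinuousFunction

private lemma integrable_of_integral_eq_one' {Ω : Type*} [MeasurableSpace Ω] {P : Measure Ω}
    {h : Ω → ℝ} (hmean : ∫ ω, h ω ∂P = 1) : Integrable h P := by
  by_contra hc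
  rw [integral_undef hc] at hmean; norm_num at hmean

private lemma trunc_err {Ω : Type*} [MeasurableSpace Ω] (P : Measure Ω) [IsProbabilityMeasure P]
    {E : Type*} [TopologicalSpace E]
    (g : E →ᵇ ℝ) (ζ : Ω → E) {h : Ω → ℝ}
    (hζ : AEStronglyMeasurable (fun ω => g (ζ ω)) P) (hh : Measurable h)
    (hpos : ∀ ω, 0 ≤ h ω) (hmean : ∫ ω, h ω ∂P = 1) {M : ℝ} (hM : 0 ≤ M) :
    |∫ ω, g (ζ ω) * h ω ∂P - ∫ ω, g (ζ ω) * min (h ω) M ∂P|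
      ≤ ‖g‖ * (1 - ∫ ω, min (h ω) M ∂P) := by
  have hint : Integrable h P := integrable_of_integral_eq_one' hmean
  have hmin : Integrable (fun ω => min (h ω) M) P := by
    refine hint.mono ((hh.min measurable_const).aestronglyMeasurable) ?_
    filter_upwards with ω
    rw [Real.norm_eq_abs, Real.norm_eq_abs, abs_of_nonneg (le_min (hpos ω) hM),
      abs_of_nonneg (hpos ω)]
    exact min_le_left _ _
  have hgb : ∀ ω, ‖g (ζ ω)‖ ≤ ‖g‖ := fun ω => g.norm_coe_le_norm _
  have hmul1 : Integrable (fun ω => g (ζ ω) * h ω) P := hint.bdd_mul hζ (Filter.Eventually.of_forall hgb)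
  have hmul2 : Integrable (fun ω => g (ζ ω) * min (h ω) M) P := hmin.bdd_mul hζ (Filter.Eventually.of_forall hgb)
  rw [← integral_sub hmul1 hmul2]
  have e1 : ∀ ω, g (ζ ω) * h ω - g (ζ ω) * min (h ω) M = g (ζ ω) * (h ω - min (h ω) M) := by
    intro ω; ring
  calc |∫ ω, (g (ζ ω) * h ω - g (ζ ω) * min (h ω) M) ∂P|
      ≤ ∫ ω, |g (ζ ω) * h ω - g (ζ ω) * min (h ω) M| ∂P := by
        simpa [Real.norm_eq_abs] using norm_integral_le_integral_norm
          (μ := P) (f := fun ω => g (ζ ω) * h ω - g (ζ ω) * min (h ω) M)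
    _ ≤ ∫ ω, ‖g‖ * (h ω - min (h ω) M) ∂P := by
        refine integral_mono ((hmul1.sub hmul2).abs) ((hint.sub hmin).const_mul _) ?_
        intro ω
        dsimp only
        rw [e1 ω, abs_mul]
        have hnn : 0 ≤ h ω - min (h ω) M := sub_nonneg.mpr (min_le_left _ _)
        calc |g (ζ ω)| * |h ω - min (h ω) M| = ‖g (ζ ω)‖ * (h ω - min (h ω) M) := by
              rw [abs_of_nonneg hnn, Real.norm_eq_abs]
          _ ≤ ‖g‖ * (h ω - min (h ω) M) := mul_le_mul_of_nonneg_right (hgb ω) hnn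
    _ = ‖g‖ * (1 - ∫ ω, min (h ω) M ∂P) := by
        rw [integral_const_mul, integral_sub hint hmin, hmean]

theorem girsanov_reweighting_stable_under_weak_convergence
    {Ω : Type*} [MeasurableSpace Ω] (P : Measure Ω) [IsProbabilityMeasure P]
    {E : Type*} [MeasurableSpace E] [TopologicalSpace E] [PolishSpace E]
    [BorelSpace E]
    (ξk : ℕ → Ω → E) (ξ : Ω → E) (ηk : ℕ → Ω → ℝ) (η : Ω → ℝ)
    (hξk : ∀ k, Measurable (ξk k)) (hξ : Measurable ξ)
    (hηk : ∀ k, Measurable (ηk k)) (hη : Measurable η)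
    (hηknonneg : ∀ k, ∀ ω, 0 ≤ ηk k ω) (hηnonneg : ∀ ω, 0 ≤ η ω)
    (hηkmean : ∀ k, ∫ ω, ηk k ω ∂P = 1) (hηmean : ∫ ω, η ω ∂P = 1)
    (hconv : ∀ f : E × ℝ →ᵇ ℝ,
      Filter.Tendsto (fun k => ∫ ω, f (ξk k ω, ηk k ω) ∂P) Filter.atTop
        (nhds (∫ ω, f (ξ ω, η ω) ∂P))) :
    ∀ g : E →ᵇ ℝ,
      Filter.Tendsto
        (fun k => ∫ ω, g (ξk k ω)
            ∂(P.withDensity (fun ω => ENNReal.ofReal (ηk k ω))))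
        Filter.atTop
        (nhds (∫ ω, g (ξ ω)
            ∂(P.withDensity (fun ω => ENNReal.ofReal (η ω))))) := by
  intro g
  -- rewrite withDensity integrals
  have hwd : ∀ (ζ : Ω → E) (h : Ω → ℝ), Measurable h → (∀ ω, 0 ≤ h ω) →
      ∫ ω, g (ζ ω) ∂(P.withDensity (fun ω => ENNReal.ofReal (h ω)))
        = ∫ ω, g (ζ ω) * h ω ∂P := by
    intro ζ h hm hpos
    rw [show (fun ω => ENNReal.ofReal (h ω)) = fun ω => ((h ω).toNNReal : ENNReal) from rfl]
    rw [integral_withDensity_eq_integral_smul hm.real_toNNReal]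
    congr 1; ext ω
    simp [NNReal.smul_def, Real.coe_toNNReal _ (hpos ω), mul_comm]
  simp only [hwd (ξk _) (ηk _) (hηk _) (hηknonneg _), hwd ξ η hη hηnonneg]
  -- measurability of g ∘ ξ
  have hgm : ∀ (ζ : Ω → E), Measurable ζ → AEStronglyMeasurable (fun ω => g (ζ ω)) P :=
    fun ζ hζ => (g.continuous.comp_aestronglyMeasurable hζ.aestronglyMeasurable)
  -- bounded continuous truncations
  rw [Metric.tendsto_atTop]
  intro ε hε
  set C : ℝ := ‖g‖ + 1 with hC
  have hC1 : (1:ℝ) ≤ C := by simp [hC, norm_nonneg]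
  have hCpos : (0:ℝ) < C := lt_of_lt_of_le one_pos hC1
  set δ : ℝ := ε / (3 * C) with hδ
  have hδpos : 0 < δ := by positivity
  -- choose M : pick n with ∫ min(η, n) > 1 - δ
  have hηint : Integrable η P := integrable_of_integral_eq_one' hηmean
  have hmc : Filter.Tendsto (fun n : ℕ => ∫ ω, min (η ω) n ∂P) Filter.atTop (nhds 1) := by
    rw [← hηmean]
    refine integral_tendsto_of_tendsto_of_monotone (fun n => ?_) hηint ?_ ?_
    · refine hηint.mono ((hη.min measurable_const).aestronglyMeasurable) ?_
      filter_upwards with ω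
      rw [Real.norm_eq_abs, Real.norm_eq_abs,
        abs_of_nonneg (le_min (hηnonneg ω) (Nat.cast_nonneg n)), abs_of_nonneg (hηnonneg ω)]
      exact min_le_left _ _
    · filter_upwards with ω
      intro m n hmn
      exact min_le_min le_rfl (Nat.cast_le.mpr hmn)
    · filter_upwards with ω
      have : ∀ᶠ n : ℕ in Filter.atTop, min (η ω) (n:ℝ) = η ω := by
        filter_upwards [Filter.eventually_ge_atTop ⌈η ω⌉₊] with n hn
        exact min_eq_left ((Nat.le_ceil _).trans (Nat.cast_le.mpr hn))
      exact Filter.Tendsto.congr' (this.mono fun n h => h.symm) tendsto_const_nhds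
  obtain ⟨n, hn⟩ := (hmc.eventually (eventually_gt_nhds (by linarith : 1 - δ < 1))).exists
  set M : ℝ := (n : ℝ) with hMdef
  have hM0 : 0 ≤ M := Nat.cast_nonneg n
  -- the bounded continuous functions
  have hcont1 : Continuous (fun p : E × ℝ => g p.1 * max (min p.2 M) 0) :=
    (g.continuous.comp continuous_fst).mul
      (((continuous_snd.min continuous_const).max continuous_const))
  have hbd1 : ∀ p : E × ℝ, ‖g p.1 * max (min p.2 M) 0‖ ≤ ‖g‖ * M := by
    intro p
    rw [norm_mul]
    gcongr
    · exact g.norm_coe_le_norm _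
    · rw [Real.norm_eq_abs, abs_of_nonneg (le_max_right _ _)]
      exact max_le (min_le_right _ _) hM0
  set fM : E × ℝ →ᵇ ℝ := BoundedContinuousFunction.ofNormedAddCommGroup _ hcont1 (‖g‖ * M) hbd1
    with hfM
  have hcont2 : Continuous (fun p : E × ℝ => max (min p.2 M) 0) :=
    ((continuous_snd.min continuous_const).max continuous_const)
  have hbd2 : ∀ p : E × ℝ, ‖max (min p.2 M) 0‖ ≤ M := by
    intro p
    rw [Real.norm_eq_abs, abs_of_nonneg (le_max_right _ _)]
    exact max_le (min_le_right _ _) hM0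
  set hMf : E × ℝ →ᵇ ℝ := BoundedContinuousFunction.ofNormedAddCommGroup _ hcont2 M hbd2
    with hhMf
  have happ1 : ∀ (ζ : Ω → E) (h : Ω → ℝ), (∀ ω, 0 ≤ h ω) →
      (∫ ω, fM (ζ ω, h ω) ∂P) = ∫ ω, g (ζ ω) * min (h ω) M ∂P := by
    intro ζ h hpos
    congr 1; ext ω
    simp [hfM, BoundedContinuousFunction.coe_ofNormedAddCommGroup,
      max_eq_left (le_min (hpos ω) hM0)]
  have happ2 : ∀ (ζ : Ω → E) (h : Ω → ℝ), (∀ ω, 0 ≤ h ω) →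
      (∫ ω, hMf (ζ ω, h ω) ∂P) = ∫ ω, min (h ω) M ∂P := by
    intro ζ h hpos
    congr 1; ext ω
    simp [hhMf, BoundedContinuousFunction.coe_ofNormedAddCommGroup,
      max_eq_left (le_min (hpos ω) hM0)]
  -- convergence facts
  have hc1 := hconv fM
  have hc2 := hconv hMf
  simp only [happ1 (ξk _) (ηk _) (hηknonneg _), happ1 ξ η hηnonneg] at hc1
  simp only [happ2 (ξk _) (ηk _) (hηknonneg _), happ2 ξ η hηnonneg] at hc2
  -- eventually bounds
  have hev1 : ∀ᶠ k in Filter.atTop,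
      |(∫ ω, g (ξk k ω) * min (ηk k ω) M ∂P) - ∫ ω, g (ξ ω) * min (η ω) M ∂P| < δ := by
    have := hc1.eventually (Metric.ball_mem_nhds _ hδpos)
    filter_upwards [this] with k hk
    simpa [Real.dist_eq] using hk
  have hev2 : ∀ᶠ k in Filter.atTop, 1 - δ < ∫ ω, min (ηk k ω) M ∂P :=
    hc2.eventually (eventually_gt_nhds hn)
  obtain ⟨N, hN⟩ := (hev1.and hev2).exists_forall_of_atTop
  refine ⟨N, fun k hk => ?_⟩
  obtain ⟨h1, h2⟩ := hN k hk
  rw [Real.dist_eq]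
  have t1 : |(∫ ω, g (ξk k ω) * ηk k ω ∂P) - ∫ ω, g (ξk k ω) * min (ηk k ω) M ∂P|
      ≤ ‖g‖ * (1 - ∫ ω, min (ηk k ω) M ∂P) :=
    trunc_err P g (ξk k) (hgm _ (hξk k)) (hηk k) (hηknonneg k) (hηkmean k) hM0
  have t3 : |(∫ ω, g (ξ ω) * η ω ∂P) - ∫ ω, g (ξ ω) * min (η ω) M ∂P|
      ≤ ‖g‖ * (1 - ∫ ω, min (η ω) M ∂P) :=
    trunc_err P g ξ (hgm _ hξ) hη hηnonneg hηmean hM0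
  have hg0 : (0:ℝ) ≤ ‖g‖ := norm_nonneg _
  have b1 : ‖g‖ * (1 - ∫ ω, min (ηk k ω) M ∂P) ≤ C * δ := by
    have : 1 - ∫ ω, min (ηk k ω) M ∂P ≤ δ := by linarith
    calc ‖g‖ * (1 - ∫ ω, min (ηk k ω) M ∂P) ≤ ‖g‖ * δ := by
          rcases le_or_gt (1 - ∫ ω, min (ηk k ω) M ∂P) 0 with h | h
          · nlinarith
          · exact mul_le_mul_of_nonneg_left this hg0
      _ ≤ C * δ := by nlinarith [hδpos.le]
  have b3 : ‖g‖ * (1 - ∫ ω, min (η ω) M ∂P) ≤ C * δ := by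
    have : 1 - ∫ ω, min (η ω) M ∂P ≤ δ := by linarith
    calc ‖g‖ * (1 - ∫ ω, min (η ω) M ∂P) ≤ ‖g‖ * δ := by
          rcases le_or_gt (1 - ∫ ω, min (η ω) M ∂P) 0 with h | h
          · nlinarith
          · exact mul_le_mul_of_nonneg_left this hg0
      _ ≤ C * δ := by nlinarith [hδpos.le]
  have hδC : 3 * (C * δ) = ε := by
    rw [hδ]
    field_simp [hCpos.ne']
  calc |(∫ ω, g (ξk k ω) * ηk k ω ∂P) - ∫ ω, g (ξ ω) * η ω ∂P|
      ≤ |(∫ ω, g (ξk k ω) * ηk k ω ∂P) - ∫ ω, g (ξk k ω) * min (ηk k ω) M ∂P|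
        + |(∫ ω, g (ξk k ω) * min (ηk k ω) M ∂P) - ∫ ω, g (ξ ω) * min (η ω) M ∂P|
        + |(∫ ω, g (ξ ω) * min (η ω) M ∂P) - ∫ ω, g (ξ ω) * η ω ∂P| := by
        have := abs_sub_le (∫ ω, g (ξk k ω) * ηk k ω ∂P)
          (∫ ω, g (ξ ω) * min (η ω) M ∂P) (∫ ω, g (ξ ω) * η ω ∂P)
        have h2' := abs_sub_le (∫ ω, g (ξk k ω) * ηk k ω ∂P)
          (∫ ω, g (ξk k ω) * min (ηk k ω) M ∂P) (∫ ω, g (ξ ω) * min (η ω) M ∂P)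
        linarith
    _ < C * δ + δ + C * δ := by
        have t3' : |(∫ ω, g (ξ ω) * min (η ω) M ∂P) - ∫ ω, g (ξ ω) * η ω ∂P|
            ≤ ‖g‖ * (1 - ∫ ω, min (η ω) M ∂P) := by rw [abs_sub_comm]; exact t3
        linarith
    _ ≤ ε := by
        have hlt : δ ≤ C * δ := by nlinarith [hδpos.le]
        linarith [hδC]
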